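/- Let $A$ be a dilation matrix, $B = A^t$, $k \in \mathbb{Z}^n \setminus \{0\}$, and $p \in \mathbb{Z} \setminus \{0\}$. Define $f_\alpha(x) = B^{-p}x - 2\alpha\pi$ for $\alpha \in \mathbb{Z}^n$ and $g_j(x) = B^{-j}x - 2k\pi$ for $j \in \mathbb{Z}$, and let $Y$ be the set of all fixed points of all the maps $f_\alpha$ and $g_j$. Then for any $y \notin \overline{Y}$ there exists $\epsilon > 0$ such that $f_\alpha(N_\epsilon(y)) \cap N_\epsilon(y) = \emptyset$ and $g_j(N_\epsilon(y)) \cap N_\epsilon(y) = \emptyset$ for all $\alpha \in \mathbb{Z}^n$ and $j \in \mathbb{Z}$. -/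

import Mathlib

open MeasureTheory Matrix Complex Real

noncomputable section

abbrev Rn (n : ℕ) := Fin n → ℝ

/-- The real matrix associated to an integer matrix. -/
def matR {n : ℕ} (A : Matrix (Fin n) (Fin n) ℤ) : Matrix (Fin n) (Fin n) ℝ :=
  A.map (Int.cast : ℤ → ℝ)

/-- A dilation matrix: an integer matrix all of whose (complex) eigenvalues
have absolute value greater than 1. -/
def IsDilationMatrix {n : ℕ} (A : Matrix (Fin n) (Fin n) ℤ) : Prop :=
  ∀ μ : ℂ, (A.map (Int.cast : ℤ → ℂ)).charpoly.IsRoot μ → 1 < ‖μ‖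

/-- An integer vector viewed as a real vector. -/
def intVec {n : ℕ} (k : Fin n → ℤ) : Rn n := fun i => (k i : ℝ)

/-- ψ_{j,k}(x) = a^{j/2} ψ(A^j x − k). -/
def wav {n : ℕ} (A : Matrix (Fin n) (Fin n) ℤ) (ψ : Rn n → ℂ) (j : ℤ) (k : Fin n → ℤ) :
    Rn n → ℂ :=
  fun x => ((A.det.natAbs : ℝ) ^ ((j : ℝ) / 2) : ℝ) * ψ (((matR A) ^ j).mulVec x - intVec k)

/-- ψ is an A-wavelet: the system {ψ_{j,k}} is orthonormal and complete in L²(ℝⁿ). -/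
def IsAWavelet {n : ℕ} (A : Matrix (Fin n) (Fin n) ℤ) (ψ : Rn n → ℂ) : Prop :=
  MemLp ψ 2 volume ∧
  (∀ (j j' : ℤ) (k k' : Fin n → ℤ),
      ∫ x, wav A ψ j k x * (starRingEnd ℂ) (wav A ψ j' k' x) =
        if j = j' ∧ k = k' then 1 else 0) ∧
  (∀ f : Rn n → ℂ, MemLp f 2 volume →
      (∀ (j : ℤ) (k : Fin n → ℤ), ∫ x, f x * (starRingEnd ℂ) (wav A ψ j k x) = 0) →
      f =ᵐ[volume] 0)

/-- The space V_j: closed linear span of {ψ_{l,k} : l < j, k ∈ ℤⁿ} in L². -/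
def Vsp {n : ℕ} (A : Matrix (Fin n) (Fin n) ℤ) (ψ : Rn n → ℂ)
    (hm : ∀ (j : ℤ) (k : Fin n → ℤ), MemLp (wav A ψ j k) 2 volume) (j : ℤ) :
    Submodule ℂ (Lp ℂ 2 (volume : Measure (Rn n))) :=
  (Submodule.span ℂ
    {g | ∃ (l : ℤ) (k : Fin n → ℤ), l < j ∧ g = (hm l k).toLp}).topologicalClosure

/-- Invariance of a closed subspace S of L² under all translations T_{A^{-r}k}, k ∈ ℤⁿ. -/
def GrInvariant {n : ℕ} (A : Matrix (Fin n) (Fin n) ℤ)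
    (S : Submodule ℂ (Lp ℂ 2 (volume : Measure (Rn n)))) (r : ℤ) : Prop :=
  ∀ (k : Fin n → ℤ) (f : Rn n → ℂ) (hf : MemLp f 2 volume)
    (hft : MemLp (fun x => f (x - ((matR A) ^ (-r)).mulVec (intVec k))) 2 volume),
    hf.toLp ∈ S → hft.toLp ∈ S

/-- Fourier transform with the convention f̂(ξ) = ∫ f(x) e^{-i⟨ξ,x⟩} dx. -/
def ftransform {n : ℕ} (f : Rn n → ℂ) (ξ : Rn n) : ℂ :=
  ∫ x, Complex.exp (-(Complex.I) * (∑ i, (ξ i : ℂ) * (x i : ℝ))) * f x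


/-! ### Auxiliary material for `ball_avoiding_maps` -/

section BallAvoidAux

open Filter Topology Polynomial
open scoped ENNReal NNReal

attribute [local instance] Matrix.linftyOpNormedAddCommGroup Matrix.linftyOpNormedRing
  Matrix.linftyOpNormedAlgebra Matrix.linftyOpNormedSpace

variable {N : Type*} [Fintype N] [DecidableEq N]

private lemma aux_eval_charpoly {F : Type*} [Field F] (M : Matrix N N F) (μ : F) :
    M.charpoly.eval μ = ((Matrix.scalar N) μ - M).det := by
  rw [Matrix.charpoly, _root_.eval_det, Matrix.matPolyEquiv_charmatrix]
  simp

private lemma aux_mem_spectrum_iff {F : Type*} [Field F] (M : Matrix N N F) (μ : F) :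
    μ ∈ spectrum F M ↔ M.charpoly.IsRoot μ := by
  have halg : algebraMap F (Matrix N N F) μ = Matrix.scalar N μ := by
    rw [Matrix.algebraMap_eq_diagonal, Matrix.scalar_apply]
    congr 1
  rw [spectrum.mem_iff, Matrix.isUnit_iff_isUnit_det, isUnit_iff_ne_zero, not_not,
    Polynomial.IsRoot.def, aux_eval_charpoly, halg]

private lemma aux_charpoly_transpose {R : Type*} [CommRing R] (M : Matrix N N R) :
    (Mᵀ).charpoly = M.charpoly := by
  rw [Matrix.charpoly, Matrix.charpoly, ← Matrix.det_transpose (charmatrix M)]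
  congr 1
  ext i j
  by_cases h : i = j
  · subst h
    simp [Matrix.charmatrix_apply, Matrix.transpose_apply, Matrix.diagonal_apply]
  · simp [Matrix.charmatrix_apply, Matrix.transpose_apply, Matrix.diagonal_apply, h,
      show ¬ j = i from fun h' => h h'.symm]

private lemma aux_norm_map_ofReal (M : Matrix N N ℝ) :
    ‖M.map (Complex.ofReal)‖ = ‖M‖ := by
  simp only [Matrix.linfty_opNorm_def, Matrix.map_apply, Complex.nnnorm_real]

private lemma aux_map_mul (M M' : Matrix N N ℝ) :
    (M * M').map (Complex.ofReal) = M.map Complex.ofReal * M'.map Complex.ofReal :=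
  Matrix.map_mul (f := Complex.ofRealHom)

private lemma aux_map_pow (M : Matrix N N ℝ) (m : ℕ) :
    (M ^ m).map (Complex.ofReal) = (M.map (Complex.ofReal)) ^ m := by
  induction m with
  | zero =>
      simp [Matrix.map_one Complex.ofReal Complex.ofReal_zero Complex.ofReal_one]
  | succ m ih =>
      rw [pow_succ, pow_succ, ← ih, aux_map_mul]

/-- An integer dilation matrix has nonzero determinant over `ℝ` (transposed form). -/
private lemma aux_det_isUnit {n : ℕ} (A : Matrix (Fin n) (Fin n) ℤ)
    (hA : IsDilationMatrix A) : IsUnit ((matR A)ᵀ).det := by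
  rw [Matrix.det_transpose, isUnit_iff_ne_zero]
  have hAc : (A.map (Int.cast : ℤ → ℂ)).det ≠ 0 := by
    intro h
    have hroot : (A.map (Int.cast : ℤ → ℂ)).charpoly.IsRoot 0 := by
      rw [Polynomial.IsRoot.def, aux_eval_charpoly]
      simp [Matrix.det_neg, h]
    exact absurd (hA 0 hroot) (by simp)
  have hint : A.det ≠ 0 := by
    intro h
    apply hAc
    rw [show (A.map (Int.cast : ℤ → ℂ)) = A.map (Int.castRingHom ℂ) from rfl,
      ← RingHom.mapMatrix_apply, ← RingHom.map_det]
    simp [h]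
  have : (matR A).det = ((A.det : ℤ) : ℝ) := by
    rw [show matR A = A.map (Int.castRingHom ℝ) from rfl, ← RingHom.mapMatrix_apply,
      ← RingHom.map_det]
    simp
  rw [this]
  exact_mod_cast hint

/-- Powers of the inverse of (the transpose of) a dilation matrix tend to zero in norm. -/
private lemma aux_tendsto_pow_zero {n : ℕ} [Nonempty (Fin n)] (A : Matrix (Fin n) (Fin n) ℤ)
    (hA : IsDilationMatrix A) :
    Tendsto (fun m : ℕ => ‖((matR A)ᵀ)⁻¹ ^ m‖) atTop (𝓝 0) := by
  classical
  have hdet : IsUnit ((matR A)ᵀ).det := aux_det_isUnit A hA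
  set B : Matrix (Fin n) (Fin n) ℝ := (matR A)ᵀ with hBdef
  set Bc : Matrix (Fin n) (Fin n) ℂ := B.map Complex.ofReal with hBc
  set Cc : Matrix (Fin n) (Fin n) ℂ := B⁻¹.map Complex.ofReal with hCc
  haveI : CompleteSpace (Matrix (Fin n) (Fin n) ℂ) := FiniteDimensional.complete ℂ _
  have hmul1 : Bc * Cc = 1 := by
    rw [hBc, hCc, ← aux_map_mul, Matrix.mul_nonsing_inv _ hdet]
    simp [Matrix.map_one Complex.ofReal Complex.ofReal_zero Complex.ofReal_one]
  have hmul2 : Cc * Bc = 1 := by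
    rw [hBc, hCc, ← aux_map_mul, Matrix.nonsing_inv_mul _ hdet]
    simp [Matrix.map_one Complex.ofReal Complex.ofReal_zero Complex.ofReal_one]
  set u : (Matrix (Fin n) (Fin n) ℂ)ˣ := ⟨Bc, Cc, hmul1, hmul2⟩ with hu
  have hspec : ∀ μ ∈ spectrum ℂ Cc, ‖μ‖₊ < 1 := by
    intro μ hμ
    have hCu : IsUnit Cc := ⟨u⁻¹, rfl⟩
    have hμ0 : μ ≠ 0 := by
      intro h
      rw [h] at hμ
      exact spectrum.zero_notMem ℂ hCu hμ
    have hinv : μ⁻¹ ∈ spectrum ℂ Bc := by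
      have h1 : ((Units.mk0 μ hμ0 : ℂˣ) : ℂ) ∈ spectrum ℂ ((u⁻¹ : (Matrix (Fin n) (Fin n) ℂ)ˣ) : Matrix (Fin n) (Fin n) ℂ) := hμ
      have h2 := spectrum.inv_mem_iff.mp h1
      rw [inv_inv, Units.val_inv_eq_inv_val, Units.val_mk0] at h2
      exact h2
    have hroot : (A.map (Int.cast : ℤ → ℂ)).charpoly.IsRoot μ⁻¹ := by
      have hBcA : Bc = (A.map (Int.cast : ℤ → ℂ))ᵀ := by
        rw [hBc, hBdef, matR, Matrix.transpose_map, Matrix.map_map]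
        rfl
      rw [hBcA, aux_mem_spectrum_iff, aux_charpoly_transpose] at hinv
      exact hinv
    have h1 := hA _ hroot
    rw [norm_inv] at h1
    have habs : ‖μ‖ < 1 := by
      have hpos : 0 < ‖μ‖ := norm_pos_iff.mpr hμ0
      nlinarith [mul_inv_cancel₀ (ne_of_gt hpos)]
    rw [← NNReal.coe_lt_coe]
    simpa using habs
  have hρ : spectralRadius ℂ Cc < 1 := by
    have := spectrum.spectralRadius_lt_of_forall_lt (a := Cc) hspec
    simpa using this
  obtain ⟨r, hρr, hr1⟩ := ENNReal.lt_iff_exists_nnreal_btwn.mp hρ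
  have hg := spectrum.pow_nnnorm_pow_one_div_tendsto_nhds_spectralRadius Cc
  have hev : ∀ᶠ m : ℕ in atTop, (‖Cc ^ m‖₊ : ℝ≥0∞) ^ (1/(m:ℝ)) < (r : ℝ≥0∞) :=
    hg.eventually_lt_const hρr
  have hrlt1 : (r : ℝ) < 1 := by exact_mod_cast hr1
  have key : ∀ᶠ m : ℕ in atTop, ‖Cc ^ m‖ ≤ (r : ℝ) ^ m := by
    filter_upwards [hev, Filter.eventually_ge_atTop 1] with m hm hm1
    have hm0 : (m : ℝ) ≠ 0 := by
      have : m ≠ 0 := by omega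
      exact_mod_cast this
    have h1 : ((‖Cc ^ m‖₊ : ℝ≥0∞) ^ (1/(m:ℝ))) ^ (m:ℝ) < (r : ℝ≥0∞) ^ (m:ℝ) :=
      ENNReal.rpow_lt_rpow hm (by positivity)
    rw [← ENNReal.rpow_mul, one_div, inv_mul_cancel₀ hm0, ENNReal.rpow_one] at h1
    rw [ENNReal.rpow_natCast, ← ENNReal.coe_pow, ENNReal.coe_lt_coe] at h1
    have h2 : (‖Cc ^ m‖₊ : ℝ) ≤ ((r ^ m : ℝ≥0) : ℝ) := by exact_mod_cast h1.le
    calc ‖Cc ^ m‖ = (‖Cc ^ m‖₊ : ℝ) := rfl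
    _ ≤ ((r ^ m : ℝ≥0) : ℝ) := h2
    _ = (r : ℝ) ^ m := by push_cast; ring
  have hpowtend : Tendsto (fun m : ℕ => (r : ℝ) ^ m) atTop (𝓝 0) :=
    tendsto_pow_atTop_nhds_zero_of_lt_one r.coe_nonneg hrlt1
  have hC : Tendsto (fun m : ℕ => ‖Cc ^ m‖) atTop (𝓝 0) :=
    squeeze_zero' (Filter.Eventually.of_forall fun m => norm_nonneg _) key hpowtend
  have hnorm : ∀ m : ℕ, ‖B⁻¹ ^ m‖ = ‖Cc ^ m‖ := by
    intro m
    rw [hCc, ← aux_map_pow, aux_norm_map_ofReal]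
  simpa only [hnorm] using hC

/-- Per-map contradiction: if the displacement at `y` is large compared with `ε`
and the Lipschitz constant, the map moves the ball off itself. -/
private lemma aux_per_map {n : ℕ} (M : Matrix (Fin n) (Fin n) ℝ) (c y x : Rn n) (ε : ℝ)
    (hx : ‖x - y‖ < ε) (hx' : ‖M.mulVec x - c - y‖ < ε)
    (hεd : (1 + ‖M‖) * ε ≤ ‖M.mulVec y - c - y‖) : False := by
  have h1 : M.mulVec y - c - y = M.mulVec (y - x) + (M.mulVec x - c - y) := by
    rw [Matrix.mulVec_sub]; abel
  have h2 : ‖M.mulVec y - c - y‖ ≤ ‖M.mulVec (y - x)‖ + ‖M.mulVec x - c - y‖ := by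
    rw [h1]; exact norm_add_le _ _
  have h3 : ‖M.mulVec (y - x)‖ ≤ ‖M‖ * ‖y - x‖ := Matrix.linfty_opNorm_mulVec _ _
  have h4 : ‖y - x‖ < ε := by rwa [norm_sub_rev]
  nlinarith [norm_nonneg M, norm_nonneg (y - x)]

private lemma aux_dist_lower {n : ℕ} {z y x : Rn n} {δ ε : ℝ}
    (hδz : δ ≤ dist y z) (hx : ‖x - y‖ < ε) : δ - ε < ‖x - z‖ := by
  rw [dist_eq_norm] at hδz
  have h1 : dist y z ≤ dist y x + dist x z := dist_triangle _ _ _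
  rw [dist_eq_norm, dist_eq_norm, dist_eq_norm] at h1
  have h2 : ‖y - x‖ < ε := by rwa [norm_sub_rev]
  linarith

/-- Tail contradiction when the linear part is small in norm. -/
private lemma aux_tail_small {n : ℕ} (M : Matrix (Fin n) (Fin n) ℝ) (c z y x : Rn n) (δ ε : ℝ)
    (hδ : 0 < δ) (hεδ : ε ≤ δ/6) (hM : ‖M‖ < 1/2)
    (hz : M.mulVec z - c = z) (hδz : δ ≤ dist y z)
    (hx : ‖x - y‖ < ε) (hx' : ‖M.mulVec x - c - y‖ < ε) : False := by
  have hv : δ - ε < ‖x - z‖ := aux_dist_lower hδz hx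
  have hMz : M.mulVec z = z + c := sub_eq_iff_eq_add.mp hz
  have hw : M.mulVec x - c - x = M.mulVec (x - z) - (x - z) := by
    rw [Matrix.mulVec_sub, hMz]; abel
  have h2 : ‖M.mulVec (x - z)‖ ≤ ‖M‖ * ‖x - z‖ := Matrix.linfty_opNorm_mulVec _ _
  have h3 : ‖x - z‖ - ‖M.mulVec (x - z)‖ ≤ ‖M.mulVec (x - z) - (x - z)‖ := by
    have h3' := norm_sub_norm_le (x - z) (M.mulVec (x - z))
    rwa [norm_sub_rev (x - z) (M.mulVec (x - z))] at h3'
  have h4 : M.mulVec x - c - x = (M.mulVec x - c - y) + (y - x) := by abel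
  have h5 : ‖M.mulVec x - c - x‖ ≤ ‖M.mulVec x - c - y‖ + ‖y - x‖ := by
    rw [h4]; exact norm_add_le _ _
  have h6 : ‖y - x‖ < ε := by rwa [norm_sub_rev]
  rw [hw] at h5
  nlinarith [norm_nonneg (x - z)]

/-- Tail contradiction when the inverse of the linear part is small in norm. -/
private lemma aux_tail_big {n : ℕ} (M : Matrix (Fin n) (Fin n) ℝ) (c z y x : Rn n) (δ ε : ℝ)
    (hδ : 0 < δ) (hεδ : ε ≤ δ/6) (hMdet : IsUnit M.det) (hMi : ‖M⁻¹‖ < 1/2)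
    (hz : M.mulVec z - c = z) (hδz : δ ≤ dist y z)
    (hx : ‖x - y‖ < ε) (hx' : ‖M.mulVec x - c - y‖ < ε) : False := by
  have hv : δ - ε < ‖x - z‖ := aux_dist_lower hδz hx
  have hMz : M.mulVec z = z + c := sub_eq_iff_eq_add.mp hz
  have hw : M.mulVec x - c - x = M.mulVec (x - z) - (x - z) := by
    rw [Matrix.mulVec_sub, hMz]; abel
  have h5 : M⁻¹.mulVec (M.mulVec (x - z) - (x - z)) = (x - z) - M⁻¹.mulVec (x - z) := by
    rw [Matrix.mulVec_sub, Matrix.mulVec_mulVec, Matrix.nonsing_inv_mul _ hMdet,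
      Matrix.one_mulVec]
  have h6 : ‖(x - z) - M⁻¹.mulVec (x - z)‖ ≤ ‖M⁻¹‖ * ‖M.mulVec (x - z) - (x - z)‖ := by
    rw [← h5]; exact Matrix.linfty_opNorm_mulVec _ _
  have h7 : ‖x - z‖ - ‖M⁻¹.mulVec (x - z)‖ ≤ ‖(x - z) - M⁻¹.mulVec (x - z)‖ :=
    norm_sub_norm_le _ _
  have h8 : ‖M⁻¹.mulVec (x - z)‖ ≤ ‖M⁻¹‖ * ‖x - z‖ := Matrix.linfty_opNorm_mulVec _ _
  have h4 : M.mulVec x - c - x = (M.mulVec x - c - y) + (y - x) := by abel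
  have h5' : ‖M.mulVec x - c - x‖ ≤ ‖M.mulVec x - c - y‖ + ‖y - x‖ := by
    rw [h4]; exact norm_add_le _ _
  have h6' : ‖y - x‖ < ε := by rwa [norm_sub_rev]
  rw [hw] at h5'
  nlinarith [norm_nonneg (x - z), norm_nonneg (M.mulVec (x - z) - (x - z)),
    norm_nonneg (M⁻¹ : Matrix (Fin n) (Fin n) ℝ)]


/-- For y outside the closure of the fixed point set of the maps f_α, g_j, some ball
around y is disjoint from all its images under these maps. -/
theorem ball_avoiding_maps {n : ℕ} (A : Matrix (Fin n) (Fin n) ℤ) (hA : IsDilationMatrix A)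
    (k : Fin n → ℤ) (hk : k ≠ 0) (p : ℤ) (hp : p ≠ 0) (y : Rn n)
    (hy : y ∉ closure {x : Rn n |
      (∃ α : Fin n → ℤ, ((matR A)ᵀ ^ (-p)).mulVec x - (2 * π) • intVec α = x) ∨
      (∃ j : ℤ, ((matR A)ᵀ ^ (-j)).mulVec x - (2 * π) • intVec k = x)}) :
    ∃ ε > 0,
      (∀ α : Fin n → ℤ,
        ((fun x => ((matR A)ᵀ ^ (-p)).mulVec x - (2 * π) • intVec α) '' Metric.ball y ε) ∩
          Metric.ball y ε = ∅) ∧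
      (∀ j : ℤ,
        ((fun x => ((matR A)ᵀ ^ (-j)).mulVec x - (2 * π) • intVec k) '' Metric.ball y ε) ∩
          Metric.ball y ε = ∅) := by
  classical
  obtain rfl | hn := Nat.eq_zero_or_pos n
  · exact absurd (funext fun i : Fin 0 => i.elim0) hk
  haveI : Nonempty (Fin n) := ⟨⟨0, hn⟩⟩
  haveI : CompleteSpace (Matrix (Fin n) (Fin n) ℝ) := FiniteDimensional.complete ℝ _
  have hdet : IsUnit ((matR A)ᵀ).det := aux_det_isUnit A hA
  have htend := aux_tendsto_pow_zero A hA
  set B : Matrix (Fin n) (Fin n) ℝ := (matR A)ᵀ with hBdef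
  -- a positive distance from y to the fixed point set
  rw [Metric.mem_closure_iff] at hy
  push_neg at hy
  obtain ⟨δ, hδpos, hδ⟩ := hy
  -- choose J beyond which inverse powers are tiny
  have hev : ∀ᶠ m : ℕ in Filter.atTop, ‖B⁻¹ ^ m‖ < 1/2 :=
    htend.eventually_lt_const (by norm_num)
  obtain ⟨J, hJ⟩ := Filter.eventually_atTop.mp hev
  -- displacements at y are positive
  have hDpos : ∀ j : ℤ, 0 < ‖(B ^ (-j)).mulVec y - (2 * π) • intVec k - y‖ := by
    intro j
    rw [norm_pos_iff]
    intro h0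
    rw [sub_eq_zero] at h0
    have h1 := hδ y (Or.inr ⟨j, h0⟩)
    rw [dist_self] at h1
    linarith
  have hdApos : ∀ α : Fin n → ℤ, 0 < ‖(B ^ (-p)).mulVec y - (2 * π) • intVec α - y‖ := by
    intro α
    rw [norm_pos_iff]
    intro h0
    rw [sub_eq_zero] at h0
    have h1 := hδ y (Or.inl ⟨α, h0⟩)
    rw [dist_self] at h1
    linarith
  have h2π : (0:ℝ) < 2 * π := by positivity
  have hLpnn : (0:ℝ) ≤ ‖(B ^ (-p) : Matrix (Fin n) (Fin n) ℝ)‖ := norm_nonneg _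
  -- the finite set of "close" lattice translations for the first family
  set Rbd : ℝ := (‖(B ^ (-p)).mulVec y - y‖ + 1 + ‖(B ^ (-p) : Matrix (Fin n) (Fin n) ℝ)‖) /
      (2 * π) with hRbd
  set F : Set (Fin n → ℤ) := {α | ‖intVec α‖ ≤ Rbd} with hFdef
  have hFfin : F.Finite := by
    have hsub : F ⊆ Set.pi Set.univ (fun _ : Fin n => Set.Icc (⌈-Rbd⌉) (⌊Rbd⌋)) := by
      intro α hα i _
      have h1 : |(α i : ℝ)| ≤ Rbd := by
        have h2 := norm_le_pi_norm (intVec α) i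
        have h3 : |(α i : ℝ)| ≤ ‖intVec α‖ := by
          simpa [intVec, Real.norm_eq_abs] using h2
        exact le_trans h3 hα
      rw [Set.mem_Icc]
      constructor
      · rw [Int.ceil_le]; push_cast; linarith [abs_le.mp h1]
      · rw [Int.le_floor]; push_cast; linarith [abs_le.mp h1]
    exact Set.Finite.subset (Set.Finite.pi fun _ => Set.finite_Icc _ _) hsub
  have hεF : ∃ e0 : ℝ, 0 < e0 ∧ ∀ α ∈ F,
      e0 ≤ ‖(B ^ (-p)).mulVec y - (2 * π) • intVec α - y‖ /
        (1 + ‖(B ^ (-p) : Matrix (Fin n) (Fin n) ℝ)‖) := by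
    rcases Set.eq_empty_or_nonempty F with h | h
    · exact ⟨1, one_pos, by simp [h]⟩
    · obtain ⟨α₀, hα₀, hmin⟩ := Set.exists_min_image F
        (fun α => ‖(B ^ (-p)).mulVec y - (2 * π) • intVec α - y‖ /
          (1 + ‖(B ^ (-p) : Matrix (Fin n) (Fin n) ℝ)‖)) hFfin h
      exact ⟨_, div_pos (hdApos α₀) (by linarith), hmin⟩
  obtain ⟨e0, he0pos, he0min⟩ := hεF
  -- the minimum over the middle range of the second family
  obtain ⟨j₀, hj₀mem, hj₀min⟩ := Finset.exists_min_image (Finset.Icc (-(J:ℤ)) (J:ℤ))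
    (fun j => ‖(B ^ (-j)).mulVec y - (2 * π) • intVec k - y‖ /
      (1 + ‖(B ^ (-j) : Matrix (Fin n) (Fin n) ℝ)‖)) ⟨0, by simp⟩
  set e1 : ℝ := ‖(B ^ (-j₀)).mulVec y - (2 * π) • intVec k - y‖ /
      (1 + ‖(B ^ (-j₀) : Matrix (Fin n) (Fin n) ℝ)‖) with he1def
  have he1pos : 0 < e1 :=
    div_pos (hDpos j₀) (by linarith [norm_nonneg (B ^ (-j₀) : Matrix (Fin n) (Fin n) ℝ)])
  -- the radius
  set ε : ℝ := min (min 1 (δ/6)) (min e0 e1) with hεdef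
  have hεpos : 0 < ε := by
    rw [hεdef, lt_min_iff, lt_min_iff, lt_min_iff]
    exact ⟨⟨one_pos, by linarith⟩, he0pos, he1pos⟩
  have hε1 : ε ≤ 1 := le_trans (min_le_left _ _) (min_le_left _ _)
  have hεδ6 : ε ≤ δ/6 := le_trans (min_le_left _ _) (min_le_right _ _)
  have hεe0 : ε ≤ e0 := le_trans (min_le_right _ _) (min_le_left _ _)
  have hεe1 : ε ≤ e1 := le_trans (min_le_right _ _) (min_le_right _ _)
  refine ⟨ε, hεpos, ?_, ?_⟩
  · -- the first family
    intro α
    rw [Set.eq_empty_iff_forall_notMem]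
    rintro w ⟨⟨x, hxball, rfl⟩, hwball⟩
    rw [Metric.mem_ball, dist_eq_norm] at hxball hwball
    refine aux_per_map (B ^ (-p)) ((2 * π) • intVec α) y x ε hxball hwball ?_
    have hpos : (0:ℝ) < 1 + ‖(B ^ (-p) : Matrix (Fin n) (Fin n) ℝ)‖ := by linarith
    by_cases hmem : α ∈ F
    · have hd := le_trans hεe0 (he0min α hmem)
      have h3 := mul_le_mul_of_nonneg_right hd hpos.le
      rw [div_mul_cancel₀ _ (ne_of_gt hpos)] at h3
      linarith
    · -- far translations
      have hRlt : Rbd < ‖intVec α‖ := not_le.mp hmem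
      have hsmul : ‖(2 * π) • intVec α‖ = 2 * π * ‖intVec α‖ := by
        rw [norm_smul, Real.norm_eq_abs, abs_of_pos h2π]
      have h6 : (B ^ (-p)).mulVec y - y - (2 * π) • intVec α
          = (B ^ (-p)).mulVec y - (2 * π) • intVec α - y := sub_right_comm _ _ _
      have h5 := norm_sub_norm_le ((2 * π) • intVec α) ((B ^ (-p)).mulVec y - y)
      rw [norm_sub_rev ((2 * π) • intVec α) ((B ^ (-p)).mulVec y - y), h6] at h5
      have hX : ‖(B ^ (-p)).mulVec y - y‖ + 1 + ‖(B ^ (-p) : Matrix (Fin n) (Fin n) ℝ)‖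
          < 2 * π * ‖intVec α‖ := by
        have h7 := mul_lt_mul_of_pos_left hRlt h2π
        rwa [hRbd, mul_div_cancel₀ _ (ne_of_gt h2π)] at h7
      nlinarith
  · -- the second family
    intro j
    rw [Set.eq_empty_iff_forall_notMem]
    rintro w ⟨⟨x, hxball, rfl⟩, hwball⟩
    rw [Metric.mem_ball, dist_eq_norm] at hxball hwball
    by_cases hjmem : j ∈ Finset.Icc (-(J:ℤ)) (J:ℤ)
    · refine aux_per_map (B ^ (-j)) ((2 * π) • intVec k) y x ε hxball hwball ?_
      have hpos : (0:ℝ) < 1 + ‖(B ^ (-j) : Matrix (Fin n) (Fin n) ℝ)‖ := by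
        linarith [norm_nonneg (B ^ (-j) : Matrix (Fin n) (Fin n) ℝ)]
      have hd : ε ≤ ‖(B ^ (-j)).mulVec y - (2 * π) • intVec k - y‖ /
          (1 + ‖(B ^ (-j) : Matrix (Fin n) (Fin n) ℝ)‖) := le_trans hεe1 (hj₀min j hjmem)
      have h3 := mul_le_mul_of_nonneg_right hd hpos.le
      rw [div_mul_cancel₀ _ (ne_of_gt hpos)] at h3
      linarith
    · rw [Finset.mem_Icc, not_and_or, not_le, not_le] at hjmem
      rcases hjmem with hjlt | hjgt
      · -- j < -J : the linear part is expanding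
        have hj0 : (0:ℤ) ≤ -j := by omega
        have hmJ : J ≤ (-j).toNat := by omega
        have hMeq : (B : Matrix (Fin n) (Fin n) ℝ) ^ (-j) = B ^ ((-j).toNat) := by
          rw [← zpow_natCast B ((-j).toNat)]
          congr 1
          omega
        have hMdet : IsUnit ((B ^ (-j) : Matrix (Fin n) (Fin n) ℝ)).det := hdet.det_zpow _
        have hMinv : (B ^ (-j) : Matrix (Fin n) (Fin n) ℝ)⁻¹ = B⁻¹ ^ ((-j).toNat) := by
          rw [hMeq]; exact (Matrix.inv_pow' _ _).symm
        have hMinorm : ‖(B ^ (-j) : Matrix (Fin n) (Fin n) ℝ)⁻¹‖ < 1/2 := by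
          rw [hMinv]; exact hJ _ hmJ
        have hMinorm1 : ‖(B ^ (-j) : Matrix (Fin n) (Fin n) ℝ)⁻¹‖ < 1 := by linarith
        have hfact : (B ^ (-j) : Matrix (Fin n) (Fin n) ℝ) - 1
            = (B ^ (-j)) * (1 - (B ^ (-j) : Matrix (Fin n) (Fin n) ℝ)⁻¹) := by
          rw [mul_sub, mul_one, Matrix.mul_nonsing_inv _ hMdet]
        have hMunit : IsUnit ((B ^ (-j) : Matrix (Fin n) (Fin n) ℝ) - 1) := by
          rw [hfact]
          exact ((Matrix.isUnit_iff_isUnit_det _).mpr hMdet).mul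
            (isUnit_one_sub_of_norm_lt_one hMinorm1)
        have hMdet1 : IsUnit (((B ^ (-j) : Matrix (Fin n) (Fin n) ℝ) - 1)).det :=
          (Matrix.isUnit_iff_isUnit_det _).mp hMunit
        set z : Rn n := (((B ^ (-j) : Matrix (Fin n) (Fin n) ℝ) - 1)⁻¹).mulVec
            ((2 * π) • intVec k) with hzdef
        have h1 : (((B ^ (-j) : Matrix (Fin n) (Fin n) ℝ)) - 1).mulVec z
            = (2 * π) • intVec k := by
          rw [hzdef, Matrix.mulVec_mulVec, Matrix.mul_nonsing_inv _ hMdet1, Matrix.one_mulVec]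
        have h2 : (B ^ (-j)).mulVec z - z = (2 * π) • intVec k := by
          rw [← h1, Matrix.sub_mulVec, Matrix.one_mulVec]
        have hz : (B ^ (-j)).mulVec z - (2 * π) • intVec k = z := by
          calc (B ^ (-j)).mulVec z - (2 * π) • intVec k
              = (B ^ (-j)).mulVec z - ((B ^ (-j)).mulVec z - z) := by rw [h2]
            _ = z := by abel
        have hδz := hδ z (Or.inr ⟨j, hz⟩)
        exact aux_tail_big (B ^ (-j)) ((2 * π) • intVec k) z y x δ ε hδpos hεδ6 hMdet
          hMinorm hz hδz hxball hwball
      · -- J < j : the linear part is contracting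
        have hj0 : (0:ℤ) ≤ j := by omega
        have hmJ : J ≤ j.toNat := by omega
        have hMeq : (B : Matrix (Fin n) (Fin n) ℝ) ^ (-j) = B⁻¹ ^ (j.toNat) := by
          rw [← Matrix.inv_zpow' hdet j, ← zpow_natCast B⁻¹ j.toNat]
          congr 1
          omega
        have hMnorm : ‖(B ^ (-j) : Matrix (Fin n) (Fin n) ℝ)‖ < 1/2 := by
          rw [hMeq]; exact hJ _ hmJ
        have hMnorm1 : ‖(B ^ (-j) : Matrix (Fin n) (Fin n) ℝ)‖ < 1 := by linarith
        have hMunit : IsUnit ((1 : Matrix (Fin n) (Fin n) ℝ) - B ^ (-j)) :=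
          isUnit_one_sub_of_norm_lt_one hMnorm1
        have hMdet1 : IsUnit (((1 : Matrix (Fin n) (Fin n) ℝ) - B ^ (-j))).det :=
          (Matrix.isUnit_iff_isUnit_det _).mp hMunit
        set z : Rn n := (((1 : Matrix (Fin n) (Fin n) ℝ) - B ^ (-j))⁻¹).mulVec
            (-((2 * π) • intVec k)) with hzdef
        have h1 : (((1 : Matrix (Fin n) (Fin n) ℝ)) - B ^ (-j)).mulVec z
            = -((2 * π) • intVec k) := by
          rw [hzdef, Matrix.mulVec_mulVec, Matrix.mul_nonsing_inv _ hMdet1, Matrix.one_mulVec]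
        have h2 : z - (B ^ (-j)).mulVec z = -((2 * π) • intVec k) := by
          rw [← h1, Matrix.sub_mulVec, Matrix.one_mulVec]
        have hz : (B ^ (-j)).mulVec z - (2 * π) • intVec k = z := by
          calc (B ^ (-j)).mulVec z - (2 * π) • intVec k
              = z - (z - (B ^ (-j)).mulVec z) - (2 * π) • intVec k := by abel
            _ = z - (-((2 * π) • intVec k)) - (2 * π) • intVec k := by rw [h2]
            _ = z := by abel
        have hδz := hδ z (Or.inr ⟨j, hz⟩)
        exact aux_tail_small (B ^ (-j)) ((2 * π) • intVec k) z y x δ ε hδpos hεδ6 hMnorm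
          hz hδz hxball hwball


end BallAvoidAux

end
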